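/- Let 0 < q < p and let 0 < x ≤ 1/p. Set p₁ = (p + q)/2, q₁ = √(pq), and s(x, p, q) = (√2/(p + q))·√( 1 + pq x² − √((1 − p²x²)(1 − q²x²)) ). Then ∫₀^x dy / √((1 − p²y²)(1 − q²y²)) = ∫₀^{s(x,p,q)} dy / √((1 − p₁²y²)(1 − q₁²y²)). -/

import Mathlib

open Real Set MeasureTheory intervalIntegral

noncomputable def agmV (p q t : ℝ) : ℝ := (1 - p ^ 2 * t ^ 2) * (1 - q ^ 2 * t ^ 2)
noncomputable def agmR (p q t : ℝ) : ℝ := Real.sqrt (agmV p q t)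
noncomputable def agmU (p q t : ℝ) : ℝ := 1 + p * q * t ^ 2 - agmR p q t
noncomputable def agmF (p q t : ℝ) : ℝ := Real.sqrt 2 / (p + q) * Real.sqrt (agmU p q t)

lemma agm_key (p q t b : ℝ) (hb : b^2 = (1 - p^2*t^2)*(1 - q^2*t^2)) :
    (p*q*(2*t)*b - (-(p^2*(2*t)) * (1 - q^2*t^2) + (1 - p^2*t^2) * -(q^2*(2*t)))/2)^2
      = 2*(1 + p*q*t^2 - b)*(1 - (1 + p*q*t^2 - b)/2)*((p+q)^2 - 2*p*q*(1 + p*q*t^2 - b)) := by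
  linear_combination (p^2 + q^2 + 2*p*q*b - 2*p^2*q^2*t^2) * hb

section Bounds
variable {p q t : ℝ} (hq : 0 < q) (hqp : q < p) (ht0 : 0 ≤ t) (ht1 : p * t ≤ 1)
include hq hqp ht0 ht1

lemma agmA_nonneg : 0 ≤ 1 - p ^ 2 * t ^ 2 := by
  have hpt0 : 0 ≤ p * t := mul_nonneg (by linarith) ht0
  nlinarith [mul_le_mul ht1 ht1 hpt0 zero_le_one]

lemma agmB_pos : 0 < 1 - q ^ 2 * t ^ 2 := by
  have hqt0 : 0 ≤ q * t := mul_nonneg hq.le ht0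
  have hqt1 : q * t < 1 := by
    rcases eq_or_lt_of_le ht0 with h | h
    · rw [← h]; simpa using hq
    · nlinarith
  nlinarith [mul_le_mul hqt1.le hqt1.le hqt0 zero_le_one]

lemma agmV_nonneg : 0 ≤ agmV p q t :=
  mul_nonneg (agmA_nonneg hq hqp ht0 ht1) (agmB_pos hq hqp ht0 ht1).le

lemma agmR_le_one : agmR p q t ≤ 1 := by
  have hA := agmA_nonneg hq hqp ht0 ht1
  have hB := agmB_pos hq hqp ht0 ht1
  have hv1 : agmV p q t ≤ 1 := by
    have h1 : 1 - p ^ 2 * t ^ 2 ≤ 1 := by nlinarith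
    have h2 : 1 - q ^ 2 * t ^ 2 ≤ 1 := by nlinarith
    calc agmV p q t ≤ 1 * 1 := mul_le_mul h1 h2 hB.le zero_le_one
      _ = 1 := by norm_num
  calc agmR p q t ≤ Real.sqrt 1 := Real.sqrt_le_sqrt hv1
    _ = 1 := Real.sqrt_one

lemma agmPQT_lt_one : p * q * t ^ 2 < 1 := by
  have hqt0 : 0 ≤ q * t := mul_nonneg hq.le ht0
  have hqt1 : q * t < 1 := by
    rcases eq_or_lt_of_le ht0 with h | h
    · rw [← h]; simpa using hq
    · nlinarith
  nlinarith [mul_le_mul ht1 hqt1.le hqt0 zero_le_one]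

lemma agmU_nonneg : 0 ≤ agmU p q t := by
  have h1 := agmR_le_one hq hqp ht0 ht1
  have h2 : 0 ≤ p * q * t ^ 2 := mul_nonneg (mul_nonneg (by linarith) hq.le) (sq_nonneg t)
  unfold agmU; linarith

lemma agmU_lt_two : agmU p q t < 2 := by
  have h1 := agmPQT_lt_one hq hqp ht0 ht1
  have h2 : 0 ≤ agmR p q t := Real.sqrt_nonneg _
  unfold agmU; linarith

lemma agmF_sq : (agmF p q t) ^ 2 = 2 / (p + q) ^ 2 * agmU p q t := by
  unfold agmF
  rw [mul_pow, div_pow, Real.sq_sqrt (by norm_num : (0:ℝ) ≤ 2),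
    Real.sq_sqrt (agmU_nonneg hq hqp ht0 ht1)]

lemma agmT_pos {p₁ q₁ : ℝ} (hp₁ : p₁ = (p + q) / 2) (hq₁2 : q₁ ^ 2 = p * q) :
    0 < (1 - p₁ ^ 2 * (agmF p q t) ^ 2) * (1 - q₁ ^ 2 * (agmF p q t) ^ 2) := by
  have hp : 0 < p := hq.trans hqp
  have hu0 := agmU_nonneg hq hqp ht0 ht1
  have hu2 := agmU_lt_two hq hqp ht0 ht1
  rw [agmF_sq hq hqp ht0 ht1, hq₁2, hp₁]
  have h1 : ((p + q) / 2) ^ 2 * (2 / (p + q) ^ 2 * agmU p q t) = agmU p q t / 2 := by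
    have : (p + q) ≠ 0 := by intro h; nlinarith
    field_simp
  have h2 : 0 < 1 - ((p + q) / 2) ^ 2 * (2 / (p + q) ^ 2 * agmU p q t) := by
    rw [h1]; linarith
  have h3 : p * q * (2 / (p + q) ^ 2 * agmU p q t) < 1 := by
    rw [div_mul_eq_mul_div, ← mul_div_assoc, div_lt_one (by nlinarith)]
    nlinarith [sq_nonneg (p - q)]
  have h4 : 0 < 1 - p * q * (2 / (p + q) ^ 2 * agmU p q t) := by linarith
  exact mul_pos h2 h4

end Bounds

section Strict
variable {p q t : ℝ} (hq : 0 < q) (hqp : q < p) (ht0 : 0 < t) (ht1 : p * t < 1)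
include hq hqp ht0 ht1

lemma agmV_pos : 0 < agmV p q t := by
  have hqt1 : q * t < 1 := by nlinarith
  have hA : 0 < 1 - p ^ 2 * t ^ 2 := by
    nlinarith [mul_nonneg (le_of_lt (hq.trans hqp)) ht0.le]
  have hB : 0 < 1 - q ^ 2 * t ^ 2 := by
    nlinarith [mul_nonneg hq.le ht0.le]
  exact mul_pos hA hB

lemma agmR_pos : 0 < agmR p q t :=
  Real.sqrt_pos.2 (agmV_pos hq hqp ht0 ht1)

lemma agmR_sq : (agmR p q t) ^ 2 = agmV p q t :=
  Real.sq_sqrt (agmV_pos hq hqp ht0 ht1).le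

lemma agmU_pos : 0 < agmU p q t := by
  have hr2 := agmR_sq hq hqp ht0 ht1
  have hr0 : 0 ≤ agmR p q t := Real.sqrt_nonneg _
  have hpqt : 0 < p * q * t ^ 2 := mul_pos (mul_pos (hq.trans hqp) hq) (pow_pos ht0 2)
  have hW : 0 < 1 + p * q * t ^ 2 + agmR p q t := by linarith
  have hUW : agmU p q t * (1 + p * q * t ^ 2 + agmR p q t) = (p + q) ^ 2 * t ^ 2 := by
    unfold agmU
    unfold agmV at hr2
    linear_combination -hr2
  have hRHS : 0 < (p + q) ^ 2 * t ^ 2 := mul_pos (pow_pos (by linarith) 2) (pow_pos ht0 2)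
  nlinarith

end Strict

noncomputable def agmVP (p q t : ℝ) : ℝ :=
  -(p ^ 2 * (2 * t)) * (1 - q ^ 2 * t ^ 2) + (1 - p ^ 2 * t ^ 2) * -(q ^ 2 * (2 * t))

lemma agm_hasDerivAt {p q t p₁ q₁ : ℝ} (hq : 0 < q) (hqp : q < p)
    (ht0 : 0 < t) (ht1 : p * t < 1)
    (hp₁ : p₁ = (p + q) / 2) (hq₁2 : q₁ ^ 2 = p * q) :
    HasDerivAt (fun y => agmF p q y)
      (Real.sqrt ((1 - p₁ ^ 2 * (agmF p q t) ^ 2) * (1 - q₁ ^ 2 * (agmF p q t) ^ 2))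
        / Real.sqrt (agmV p q t)) t := by
  have hp : 0 < p := hq.trans hqp
  have hpq : 0 < p + q := by linarith
  have hv0 : 0 < agmV p q t := agmV_pos hq hqp ht0 ht1
  have hvne : agmV p q t ≠ 0 := ne_of_gt hv0
  have hr0 : 0 < agmR p q t := agmR_pos hq hqp ht0 ht1
  have hrne : agmR p q t ≠ 0 := ne_of_gt hr0
  have hu0 : 0 < agmU p q t := agmU_pos hq hqp ht0 ht1
  have hune : agmU p q t ≠ 0 := ne_of_gt hu0
  have hA : 0 ≤ 1 - p ^ 2 * t ^ 2 := agmA_nonneg hq hqp ht0.le ht1.le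
  have hB : 0 < 1 - q ^ 2 * t ^ 2 := agmB_pos hq hqp ht0.le ht1.le
  -- derivative chain
  have hA' : HasDerivAt (fun y : ℝ => 1 - p ^ 2 * y ^ 2) (-(p ^ 2 * (2 * t))) t := by
    simpa using ((hasDerivAt_pow 2 t).const_mul (p ^ 2)).const_sub 1
  have hB' : HasDerivAt (fun y : ℝ => 1 - q ^ 2 * y ^ 2) (-(q ^ 2 * (2 * t))) t := by
    simpa using ((hasDerivAt_pow 2 t).const_mul (q ^ 2)).const_sub 1
  have hvd : HasDerivAt (fun y => agmV p q y) (agmVP p q t) t := by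
    have := hA'.mul hB'
    simpa [agmV, agmVP, Pi.mul_def] using this
  have hrd : HasDerivAt (fun y => agmR p q y) (agmVP p q t / (2 * agmR p q t)) t := by
    have := hvd.sqrt hvne
    simpa [agmR] using this
  have hud : HasDerivAt (fun y => agmU p q y)
      (p * q * (2 * t) - agmVP p q t / (2 * agmR p q t)) t := by
    have h1 : HasDerivAt (fun y : ℝ => 1 + p * q * y ^ 2) (p * q * (2 * t)) t := by
      simpa using ((hasDerivAt_pow 2 t).const_mul (p * q)).const_add 1
    have := h1.sub hrd
    simpa [agmU, Pi.sub_def] using this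
  have hfd : HasDerivAt (fun y => agmF p q y)
      (Real.sqrt 2 / (p + q) *
        ((p * q * (2 * t) - agmVP p q t / (2 * agmR p q t)) / (2 * Real.sqrt (agmU p q t)))) t := by
    have := (hud.sqrt hune).const_mul (Real.sqrt 2 / (p + q))
    simpa [agmF] using this
  -- the derivative value agrees with the claimed one
  set N := p * q * (2 * t) - agmVP p q t / (2 * agmR p q t) with hN
  set dval := Real.sqrt 2 / (p + q) * (N / (2 * Real.sqrt (agmU p q t))) with hdval
  have hvp : agmVP p q t ≤ 0 := by
    unfold agmVP
    have h1 : 0 ≤ p ^ 2 * (2 * t) := mul_nonneg (sq_nonneg p) (by linarith)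
    have h2 : 0 ≤ q ^ 2 * (2 * t) := mul_nonneg (sq_nonneg q) (by linarith)
    nlinarith
  have hd0 : 0 ≤ dval := by
    have h2 : agmVP p q t / (2 * agmR p q t) ≤ 0 :=
      div_nonpos_iff.mpr (Or.inr ⟨hvp, by linarith⟩)
    have hN0 : 0 ≤ N := by
      rw [hN]
      have h3 : 0 ≤ p * q * (2 * t) := by positivity
      linarith
    rw [hdval]
    have h4 : 0 ≤ Real.sqrt 2 / (p + q) := div_nonneg (Real.sqrt_nonneg 2) hpq.le
    exact mul_nonneg h4 (div_nonneg hN0 (by positivity))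
  have hb2 : (agmR p q t) ^ 2 = (1 - p ^ 2 * t ^ 2) * (1 - q ^ 2 * t ^ 2) := by
    have h := agmR_sq hq hqp ht0 ht1
    rwa [show agmV p q t = (1 - p ^ 2 * t ^ 2) * (1 - q ^ 2 * t ^ 2) from rfl] at h
  have key := agm_key p q t (agmR p q t) hb2
  have hufold : (1 + p * q * t ^ 2 - agmR p q t) = agmU p q t := rfl
  rw [hufold] at key
  have e1 : dval ^ 2 = 2 / (p + q) ^ 2 * (N ^ 2 / (4 * agmU p q t)) := by
    have h4 : (2 * Real.sqrt (agmU p q t)) ^ 2 = 4 * agmU p q t := by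
      rw [mul_pow, Real.sq_sqrt hu0.le]; norm_num
    rw [hdval, mul_pow, div_pow, div_pow, h4, Real.sq_sqrt (by norm_num : (0:ℝ) ≤ 2)]
  have e2 : N ^ 2 = (p * q * (2 * t) * agmR p q t
      - (-(p ^ 2 * (2 * t)) * (1 - q ^ 2 * t ^ 2) + (1 - p ^ 2 * t ^ 2) * -(q ^ 2 * (2 * t))) / 2) ^ 2
      / (agmR p q t) ^ 2 := by
    rw [hN]
    unfold agmVP
    field_simp
  have hd2 : dval ^ 2
      = (1 - p₁ ^ 2 * (agmF p q t) ^ 2) * (1 - q₁ ^ 2 * (agmF p q t) ^ 2) / agmV p q t := by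
    rw [agmF_sq hq hqp ht0.le ht1.le, hq₁2, hp₁, e1, e2, key,
      show agmV p q t = (agmR p q t) ^ 2 from (agmR_sq hq hqp ht0 ht1).symm]
    have hpqne : (p + q) ≠ 0 := ne_of_gt hpq
    field_simp
    ring
  have hT0 : 0 < (1 - p₁ ^ 2 * (agmF p q t) ^ 2) * (1 - q₁ ^ 2 * (agmF p q t) ^ 2) :=
    agmT_pos hq hqp ht0.le ht1.le hp₁ hq₁2
  have heq : Real.sqrt ((1 - p₁ ^ 2 * (agmF p q t) ^ 2) * (1 - q₁ ^ 2 * (agmF p q t) ^ 2))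
      / Real.sqrt (agmV p q t) = dval := by
    rw [← Real.sqrt_div hT0.le, hd2.symm, Real.sqrt_sq hd0]
  rw [heq]
  exact hfd

lemma agm_pointwise {p q t p₁ q₁ : ℝ} (hq : 0 < q) (hqp : q < p)
    (ht0 : 0 ≤ t) (ht1 : p * t ≤ 1)
    (hp₁ : p₁ = (p + q) / 2) (hq₁2 : q₁ ^ 2 = p * q) :
    1 / Real.sqrt (agmV p q t)
      = (1 / Real.sqrt ((1 - p₁ ^ 2 * (agmF p q t) ^ 2) * (1 - q₁ ^ 2 * (agmF p q t) ^ 2)))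
        * (Real.sqrt ((1 - p₁ ^ 2 * (agmF p q t) ^ 2) * (1 - q₁ ^ 2 * (agmF p q t) ^ 2))
            / Real.sqrt (agmV p q t)) := by
  have hT0 : 0 < (1 - p₁ ^ 2 * (agmF p q t) ^ 2) * (1 - q₁ ^ 2 * (agmF p q t) ^ 2) :=
    agmT_pos hq hqp ht0 ht1 hp₁ hq₁2
  have hTs : Real.sqrt ((1 - p₁ ^ 2 * (agmF p q t) ^ 2) * (1 - q₁ ^ 2 * (agmF p q t) ^ 2)) ≠ 0 :=
    ne_of_gt (Real.sqrt_pos.2 hT0)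
  rw [div_mul_div_comm, one_mul, div_mul_cancel_left₀ hTs, one_div]

lemma agmV_continuous (p q : ℝ) : Continuous (fun t => agmV p q t) := by
  unfold agmV; continuity

lemma agmF_continuous (p q : ℝ) : Continuous (fun t => agmF p q t) := by
  unfold agmF agmU agmR agmV; continuity

lemma agmF_zero (p q : ℝ) : agmF p q 0 = 0 := by
  unfold agmF agmU agmR agmV
  norm_num

lemma agm_lhs_integrable {p q x : ℝ} (hq : 0 < q) (hqp : q < p)
    (hx0 : 0 < x) (hx1 : x ≤ 1 / p) :
    IntegrableOn (fun t => 1 / Real.sqrt (agmV p q t)) (Icc 0 x) := by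
  have hp : 0 < p := hq.trans hqp
  have hxp : p * x ≤ 1 := by
    have := (le_div_iff₀ hp).1 hx1; linarith
  have hBx : 0 < 1 - q ^ 2 * x ^ 2 := agmB_pos hq hqp hx0.le hxp
  set c : ℝ := p * (1 - q ^ 2 * x ^ 2) with hc
  have hc0 : 0 < c := mul_pos hp hBx
  -- pointwise lower bound for agmV
  have hvlow : ∀ t ∈ Icc (0:ℝ) x, c * (1 / p - t) ≤ agmV p q t := by
    rintro t ⟨ht0, htx⟩
    have htp : p * t ≤ 1 := by nlinarith
    have hA : 0 ≤ 1 - p ^ 2 * t ^ 2 := agmA_nonneg hq hqp ht0 htp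
    have hB : 0 < 1 - q ^ 2 * t ^ 2 := agmB_pos hq hqp ht0 htp
    have hBge : 1 - q ^ 2 * x ^ 2 ≤ 1 - q ^ 2 * t ^ 2 := by
      nlinarith [mul_nonneg (sq_nonneg q) (mul_nonneg (sub_nonneg.2 htx) (add_nonneg ht0 (le_trans ht0 htx)))]
    have hAge : p * (1 / p - t) ≤ 1 - p ^ 2 * t ^ 2 := by
      have h1 : p * (1 / p - t) = 1 - p * t := by field_simp
      rw [h1]
      nlinarith [mul_nonneg (mul_nonneg hp.le ht0) (sub_nonneg.2 htp)]
    have h2 : 0 ≤ 1 / p - t := by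
      rw [sub_nonneg]; exact le_trans htx hx1
    show c * (1 / p - t) ≤ (1 - p ^ 2 * t ^ 2) * (1 - q ^ 2 * t ^ 2)
    calc c * (1 / p - t) = (p * (1 / p - t)) * (1 - q ^ 2 * x ^ 2) := by rw [hc]; ring
      _ ≤ (1 - p ^ 2 * t ^ 2) * (1 - q ^ 2 * t ^ 2) := by
          apply mul_le_mul hAge hBge hBx.le hA
  -- the bound function
  have hbound : ∀ t ∈ Icc (0:ℝ) x,
      ‖1 / Real.sqrt (agmV p q t)‖
        ≤ (1 / Real.sqrt c) * (1 / p - t) ^ (-(1:ℝ)/2) := by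
    rintro t ⟨ht0, htx⟩
    have h2 : 0 ≤ 1 / p - t := by rw [sub_nonneg]; exact le_trans htx hx1
    have hrpow : (1 / p - t) ^ (-(1:ℝ)/2) = (Real.sqrt (1 / p - t))⁻¹ := by
      rw [Real.sqrt_eq_rpow, ← Real.rpow_neg h2]
      norm_num
    have hnn : 0 ≤ 1 / Real.sqrt (agmV p q t) :=
      div_nonneg zero_le_one (Real.sqrt_nonneg _)
    rw [Real.norm_eq_abs, abs_of_nonneg hnn, hrpow]
    rcases eq_or_lt_of_le h2 with h | h
    · -- t = 1/p : both sides vanish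
      have hveq : agmV p q t = 0 := by
        have : t = 1 / p := by linarith
        unfold agmV
        rw [this]
        have : p ^ 2 * (1 / p) ^ 2 = 1 := by field_simp
        rw [this]; ring
      rw [hveq, Real.sqrt_zero, ← h, Real.sqrt_zero]
      norm_num
    · -- t < 1/p : genuine bound
      have hv0 : 0 < c * (1 / p - t) := mul_pos hc0 h
      have hs1 : Real.sqrt (c * (1 / p - t)) ≤ Real.sqrt (agmV p q t) :=
        Real.sqrt_le_sqrt (hvlow t ⟨ht0, htx⟩)
      have hs0 : 0 < Real.sqrt (c * (1 / p - t)) := Real.sqrt_pos.2 hv0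
      have h3 : 1 / Real.sqrt (agmV p q t) ≤ 1 / Real.sqrt (c * (1 / p - t)) :=
        one_div_le_one_div_of_le hs0 hs1
      calc 1 / Real.sqrt (agmV p q t) ≤ 1 / Real.sqrt (c * (1 / p - t)) := h3
        _ = 1 / Real.sqrt c * (Real.sqrt (1 / p - t))⁻¹ := by
            rw [Real.sqrt_mul hc0.le]
            field_simp
  -- the dominating function is integrable
  have h1 : IntervalIntegrable (fun y : ℝ => y ^ (-(1:ℝ)/2)) volume (1/p) (1/p - x) :=
    intervalIntegrable_rpow' (by norm_num)
  have h2 : IntervalIntegrable (fun t : ℝ => (1/p - t) ^ (-(1:ℝ)/2)) volume 0 x := by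
    have := h1.comp_sub_left (1/p)
    simpa using this
  have h3 : IntervalIntegrable (fun t : ℝ => (1 / Real.sqrt c) * (1/p - t) ^ (-(1:ℝ)/2))
      volume 0 x := h2.const_mul _
  have h4 : IntegrableOn (fun t : ℝ => (1 / Real.sqrt c) * (1/p - t) ^ (-(1:ℝ)/2)) (Icc 0 x) :=
    (intervalIntegrable_iff_integrableOn_Icc_of_le hx0.le).1 h3
  -- measurability
  have hm : AEStronglyMeasurable (fun t => 1 / Real.sqrt (agmV p q t))
      (volume.restrict (Icc 0 x)) := by
    simp only [one_div]
    exact ((Real.continuous_sqrt.comp (agmV_continuous p q)).measurable.inv).aestronglyMeasurable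
  exact h4.mono' hm ((ae_restrict_iff' measurableSet_Icc).mpr (ae_of_all _ hbound))


/-- Lagrange's arithmetic–geometric-mean invariance of the first-kind elliptic
differential: one AGM step `p₁ = (p + q)/2`, `q₁ = √(pq)` together with the
change of variable leaves the integral invariant, the new upper limit being
`s(x, p, q)`. -/
theorem lagrange_agm_invariance (p q x : ℝ) (hq : 0 < q) (hqp : q < p)
    (hx0 : 0 < x) (hx1 : x ≤ 1 / p)
    (p₁ q₁ s : ℝ)
    (hp₁ : p₁ = (p + q) / 2) (hq₁ : q₁ = Real.sqrt (p * q))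
    (hs : s = Real.sqrt 2 / (p + q) *
      Real.sqrt (1 + p * q * x ^ 2
        - Real.sqrt ((1 - p ^ 2 * x ^ 2) * (1 - q ^ 2 * x ^ 2)))) :
    ∫ y in (0:ℝ)..x,
        1 / Real.sqrt ((1 - p ^ 2 * y ^ 2) * (1 - q ^ 2 * y ^ 2))
      = ∫ y in (0:ℝ)..s,
          1 / Real.sqrt ((1 - p₁ ^ 2 * y ^ 2) * (1 - q₁ ^ 2 * y ^ 2)) := by
  have hp : 0 < p := hq.trans hqp
  have hpq : 0 < p + q := by linarith
  have hxp : p * x ≤ 1 := by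
    have := (le_div_iff₀ hp).1 hx1; linarith
  have hq₁2 : q₁ ^ 2 = p * q := by
    rw [hq₁]; exact Real.sq_sqrt (mul_pos hp hq).le
  set g : ℝ → ℝ := fun y => 1 / Real.sqrt ((1 - p₁ ^ 2 * y ^ 2) * (1 - q₁ ^ 2 * y ^ 2))
    with hgdef
  set F' : ℝ → ℝ := fun t =>
    Real.sqrt ((1 - p₁ ^ 2 * (agmF p q t) ^ 2) * (1 - q₁ ^ 2 * (agmF p q t) ^ 2))
      / Real.sqrt (agmV p q t) with hF'def
  have hfmem : ∀ t ∈ Icc (0:ℝ) x, 0 ≤ t ∧ p * t ≤ 1 := by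
    rintro t ⟨h1, h2⟩
    exact ⟨h1, by nlinarith⟩
  -- continuity of g on the image
  have hgcont : ContinuousOn g ((fun t => agmF p q t) '' Icc 0 x) := by
    rintro y ⟨t, ht, rfl⟩
    apply ContinuousAt.continuousWithinAt
    have hT := agmT_pos hq hqp (hfmem t ht).1 (hfmem t ht).2 hp₁ hq₁2
    rw [hgdef]
    apply ContinuousAt.div continuousAt_const
    · exact (Real.continuous_sqrt.comp (by continuity)).continuousAt
    · exact ne_of_gt (Real.sqrt_pos.2 hT)
  -- the pointwise identity on [0, x]
  have hEq : EqOn (fun y => 1 / Real.sqrt ((1 - p ^ 2 * y ^ 2) * (1 - q ^ 2 * y ^ 2)))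
      (fun t => (g ∘ fun t => agmF p q t) t * F' t) (Icc 0 x) := by
    intro t ht
    have h := agm_pointwise hq hqp (hfmem t ht).1 (hfmem t ht).2 hp₁ hq₁2
    simpa [Function.comp, hgdef, hF'def, agmV] using h
  -- hypotheses of the substitution theorem
  have h_hf : ContinuousOn (fun t => agmF p q t) (uIcc 0 x) :=
    (agmF_continuous p q).continuousOn
  have h_ff' : ∀ t ∈ Ioo (min 0 x) (max 0 x),
      HasDerivWithinAt (fun t => agmF p q t) (F' t) (Ioi t) t := by
    intro t ht
    rw [min_eq_left hx0.le, max_eq_right hx0.le] at ht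
    obtain ⟨ht0, htx⟩ := ht
    have htp : p * t < 1 := by nlinarith
    exact (agm_hasDerivAt hq hqp ht0 htp hp₁ hq₁2).hasDerivWithinAt
  have h_gcont' : ContinuousOn g
      ((fun t => agmF p q t) '' Ioo (min 0 x) (max 0 x)) := by
    rw [min_eq_left hx0.le, max_eq_right hx0.le]
    exact hgcont.mono (image_mono Ioo_subset_Icc_self)
  have hg1 : IntegrableOn g ((fun t => agmF p q t) '' uIcc 0 x) := by
    rw [uIcc_of_le hx0.le]
    exact hgcont.integrableOn_compact (isCompact_Icc.image (agmF_continuous p q))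
  have hg2 : IntegrableOn (fun t => (g ∘ fun t => agmF p q t) t * F' t) (uIcc 0 x) := by
    rw [uIcc_of_le hx0.le]
    exact (agm_lhs_integrable hq hqp hx0 hx1).congr_fun
      (fun t ht => hEq ht) measurableSet_Icc
  have main := intervalIntegral.integral_comp_mul_deriv''' h_hf h_ff' h_gcont' hg1 hg2
  have hfx : agmF p q x = s := by
    rw [hs]; rfl
  calc ∫ y in (0:ℝ)..x, 1 / Real.sqrt ((1 - p ^ 2 * y ^ 2) * (1 - q ^ 2 * y ^ 2))
      = ∫ t in (0:ℝ)..x, (g ∘ fun t => agmF p q t) t * F' t :=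
        intervalIntegral.integral_congr (by rw [uIcc_of_le hx0.le]; exact hEq)
    _ = ∫ u in (agmF p q 0)..(agmF p q x), g u := main
    _ = ∫ y in (0:ℝ)..s, g y := by rw [agmF_zero, hfx]
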